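/- Consequently, for p > 1, the infimum over signed transport plans ρ from δ_0 to δ_1 of ∫_{[0,1]^2} |x−y|^p d|ρ|(x,y) tends to 0, i.e. the 'signed p-Wasserstein distance' between δ_0 and δ_1 is 0. -/

import Mathlib

open MeasureTheory

namespace SignedWpAux
noncomputable section
open scoped Classical

abbrev II : Type := ↥(Set.Icc (0:ℝ) 1)

def tt (n i : ℕ) : II :=
  ⟨min ((i:ℝ)/n) 1, ⟨le_min (div_nonneg (Nat.cast_nonneg i) (Nat.cast_nonneg n)) zero_le_one,
    min_le_right _ _⟩⟩

lemma tt_coe {n i : ℕ} (hn : n ≠ 0) (h : i ≤ n) : (tt n i : ℝ) = (i:ℝ)/n := by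
  have hn' : (0:ℝ) < n := by exact_mod_cast Nat.pos_of_ne_zero hn
  exact min_eq_left ((div_le_one hn').2 (by exact_mod_cast h))

lemma tt_zero (n : ℕ) : tt n 0 = ⟨0, by norm_num⟩ := by
  apply Subtype.ext; simp [tt]

lemma tt_last {n : ℕ} (hn : n ≠ 0) : tt n n = ⟨1, by norm_num⟩ := by
  apply Subtype.ext
  have hn' : (0:ℝ) < n := by exact_mod_cast Nat.pos_of_ne_zero hn
  simp [tt_coe hn le_rfl, div_self hn'.ne']

lemma tt_ne {n i : ℕ} (h : i < n) : tt n i ≠ tt n (i+1) := by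
  have hn : n ≠ 0 := (Nat.zero_lt_of_lt h).ne'
  have hn' : (0:ℝ) < n := by exact_mod_cast Nat.pos_of_ne_zero hn
  intro he
  have h2 := congrArg (Subtype.val) he
  rw [tt_coe hn h.le, tt_coe hn h] at h2
  rw [div_eq_div_iff hn'.ne' hn'.ne'] at h2
  have h3 := mul_right_cancel₀ hn'.ne' h2
  push_cast at h3
  linarith

def μp (n : ℕ) : Measure (II × II) := ∑ i ∈ Finset.range n, Measure.dirac (tt n i, tt n (i+1))
def μm (n : ℕ) : Measure (II × II) := ∑ i ∈ Finset.Ico 1 n, Measure.dirac (tt n i, tt n i)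

instance (n : ℕ) : IsFiniteMeasure (μp n) := by unfold μp; infer_instance
instance (n : ℕ) : IsFiniteMeasure (μm n) := by unfold μm; infer_instance

lemma diag_meas : MeasurableSet {z : II × II | z.1 = z.2} :=
  (isClosed_eq continuous_fst continuous_snd).measurableSet

lemma mutsing (n : ℕ) : μp n ⟂ₘ μm n := by
  refine ⟨{z : II × II | z.1 = z.2}, diag_meas, ?_, ?_⟩
  · rw [μp, Measure.finset_sum_apply]
    refine Finset.sum_eq_zero fun i hi => ?_
    rw [Measure.dirac_apply' _ diag_meas]
    have := tt_ne (Finset.mem_range.mp hi)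
    simp [Set.indicator_apply, this]
  · rw [μm, Measure.finset_sum_apply]
    refine Finset.sum_eq_zero fun i hi => ?_
    rw [Measure.dirac_apply' _ diag_meas.compl]
    simp [Set.indicator_apply]

def JJ (n : ℕ) : JordanDecomposition (II × II) :=
  { posPart := μp n
    negPart := μm n
    mutuallySingular := mutsing n }

def ρ (n : ℕ) : SignedMeasure (II × II) := (JJ n).toSignedMeasure

lemma ρ_apply (n : ℕ) {A : Set (II × II)} (hA : MeasurableSet A) :
    ρ n A = (μp n A).toReal - (μm n A).toReal :=
  Measure.toSignedMeasure_sub_apply hA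

lemma marg_fst (n : ℕ) (hn : n ≠ 0) :
    VectorMeasure.map (ρ n) Prod.fst
      = (Measure.dirac (⟨0, by norm_num⟩ : II)).toSignedMeasure := by
  apply VectorMeasure.ext
  intro s hs
  rw [VectorMeasure.map_apply _ measurable_fst hs, ρ_apply n (measurable_fst hs),
    Measure.toSignedMeasure_apply_measurable hs]
  have hd : ∀ a : II, ((Measure.dirac a) s).toReal = (if a ∈ s then (1:ℝ) else 0) := by
    intro a
    rw [Measure.dirac_apply' _ hs]
    by_cases h : a ∈ s <;> simp [Set.indicator_apply, h]
  have hp : (μp n (Prod.fst ⁻¹' s)).toReal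
      = ∑ i ∈ Finset.range n, (if tt n i ∈ s then (1:ℝ) else 0) := by
    rw [μp, Measure.finset_sum_apply, ENNReal.toReal_sum (fun i _ => measure_ne_top _ _)]
    refine Finset.sum_congr rfl fun i _ => ?_
    rw [Measure.dirac_apply' _ (measurable_fst hs)]
    by_cases h : tt n i ∈ s <;> simp [Set.indicator_apply, Set.mem_preimage, h]
  have hm : (μm n (Prod.fst ⁻¹' s)).toReal
      = ∑ i ∈ Finset.Ico 1 n, (if tt n i ∈ s then (1:ℝ) else 0) := by
    rw [μm, Measure.finset_sum_apply, ENNReal.toReal_sum (fun i _ => measure_ne_top _ _)]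
    refine Finset.sum_congr rfl fun i _ => ?_
    rw [Measure.dirac_apply' _ (measurable_fst hs)]
    by_cases h : tt n i ∈ s <;> simp [Set.indicator_apply, Set.mem_preimage, h]
  rw [hp, hm, measureReal_def, hd, Finset.range_eq_Ico,
    Finset.sum_eq_sum_Ico_succ_bot (Nat.pos_of_ne_zero hn), tt_zero n]
  ring

lemma marg_snd (n : ℕ) (hn : n ≠ 0) :
    VectorMeasure.map (ρ n) Prod.snd
      = (Measure.dirac (⟨1, by norm_num⟩ : II)).toSignedMeasure := by
  apply VectorMeasure.ext
  intro s hs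
  rw [VectorMeasure.map_apply _ measurable_snd hs, ρ_apply n (measurable_snd hs),
    Measure.toSignedMeasure_apply_measurable hs]
  have hd : ∀ a : II, ((Measure.dirac a) s).toReal = (if a ∈ s then (1:ℝ) else 0) := by
    intro a
    rw [Measure.dirac_apply' _ hs]
    by_cases h : a ∈ s <;> simp [Set.indicator_apply, h]
  have hp : (μp n (Prod.snd ⁻¹' s)).toReal
      = ∑ i ∈ Finset.range n, (if tt n (i+1) ∈ s then (1:ℝ) else 0) := by
    rw [μp, Measure.finset_sum_apply, ENNReal.toReal_sum (fun i _ => measure_ne_top _ _)]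
    refine Finset.sum_congr rfl fun i _ => ?_
    rw [Measure.dirac_apply' _ (measurable_snd hs)]
    by_cases h : tt n (i+1) ∈ s <;> simp [Set.indicator_apply, Set.mem_preimage, h]
  have hm : (μm n (Prod.snd ⁻¹' s)).toReal
      = ∑ i ∈ Finset.Ico 1 n, (if tt n i ∈ s then (1:ℝ) else 0) := by
    rw [μm, Measure.finset_sum_apply, ENNReal.toReal_sum (fun i _ => measure_ne_top _ _)]
    refine Finset.sum_congr rfl fun i _ => ?_
    rw [Measure.dirac_apply' _ (measurable_snd hs)]
    by_cases h : tt n i ∈ s <;> simp [Set.indicator_apply, Set.mem_preimage, h]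
  have hre : ∑ i ∈ Finset.range n, (if tt n (i+1) ∈ s then (1:ℝ) else 0)
      = ∑ i ∈ Finset.Ico 1 n, (if tt n i ∈ s then (1:ℝ) else 0)
        + (if tt n n ∈ s then (1:ℝ) else 0) := by
    have h1 : ∑ i ∈ Finset.range n, (if tt n (i+1) ∈ s then (1:ℝ) else 0)
        = ∑ i ∈ Finset.Ico 1 (n+1), (if tt n i ∈ s then (1:ℝ) else 0) := by
      rw [Finset.sum_Ico_eq_sum_range]
      simp [add_comm]
    rw [h1, Finset.sum_Ico_succ_top (Nat.one_le_iff_ne_zero.mpr hn)]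
  rw [hp, hm, measureReal_def, hd, hre, tt_last hn]
  ring

lemma totalVar (n : ℕ) : (ρ n).totalVariation = μp n + μm n := by
  rw [SignedMeasure.totalVariation, ρ, JordanDecomposition.toJordanDecomposition_toSignedMeasure]
  rfl

lemma cont_f (p : ℝ) (hp : 0 ≤ p) :
    Continuous (fun z : II × II => |(z.1 : ℝ) - (z.2 : ℝ)| ^ p) := by
  apply Continuous.rpow_const
  · exact (continuous_subtype_val.comp continuous_fst).sub
      (continuous_subtype_val.comp continuous_snd) |>.abs
  · exact fun _ => Or.inr hp

lemma integ (p : ℝ) (hp : 0 ≤ p) (μ : Measure (II × II)) [IsFiniteMeasure μ] :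
    Integrable (fun z : II × II => |(z.1 : ℝ) - (z.2 : ℝ)| ^ p) μ :=
  (cont_f p hp).integrable_of_hasCompactSupport (HasCompactSupport.of_compactSpace _)

lemma cost (n : ℕ) (hn : n ≠ 0) (p : ℝ) (hp : 1 < p) :
    ∫ z, |(z.1 : ℝ) - (z.2 : ℝ)| ^ p ∂(ρ n).totalVariation = n * ((1:ℝ)/n) ^ p := by
  have hp0 : (0:ℝ) ≤ p := by linarith
  set f := fun z : II × II => |(z.1 : ℝ) - (z.2 : ℝ)| ^ p with hf
  have hn' : (0:ℝ) < n := by exact_mod_cast Nat.pos_of_ne_zero hn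
  rw [totalVar, integral_add_measure (integ p hp0 _) (integ p hp0 _)]
  have h1 : ∫ z, f z ∂(μp n) = n * ((1:ℝ)/n) ^ p := by
    rw [μp, integral_finset_sum_measure (fun i _ => integ p hp0 _)]
    have : ∀ i ∈ Finset.range n, ∫ z, f z ∂(Measure.dirac (tt n i, tt n (i+1)))
        = ((1:ℝ)/n) ^ p := by
      intro i hi
      rw [integral_dirac]
      have hi' := Finset.mem_range.mp hi
      show |(tt n i : ℝ) - (tt n (i+1) : ℝ)| ^ p = _
      rw [tt_coe hn hi'.le, tt_coe hn hi']
      have harg : (i:ℝ)/n - ((i+1:ℕ):ℝ)/n = -(1/n) := by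
        rw [div_sub_div_same]
        push_cast
        ring
      rw [harg, abs_neg, abs_of_pos (by positivity)]
    rw [Finset.sum_congr rfl this, Finset.sum_const, Finset.card_range, nsmul_eq_mul]
  have h2 : ∫ z, f z ∂(μm n) = 0 := by
    rw [μm, integral_finset_sum_measure (fun i _ => integ p hp0 _)]
    refine Finset.sum_eq_zero fun i _ => ?_
    rw [integral_dirac]
    show |(tt n i : ℝ) - (tt n i : ℝ)| ^ p = 0
    rw [sub_self, abs_zero, Real.zero_rpow (by linarith)]
  rw [h1, h2, add_zero]

end
end SignedWpAux

/-- The signed `p`-Wasserstein distance between `δ_0` and `δ_1` on `[0,1]` is `0`: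
for `p > 1`, the infimum over signed transport plans `ρ` from `δ_0` to `δ_1` of
`∫_{[0,1]²} |x-y|^p d|ρ|(x,y)` equals `0`. -/
theorem signed_Wp_dirac_zero (p : ℝ) (hp : 1 < p) :
    sInf { c : ℝ | ∃ ρ : SignedMeasure (↥(Set.Icc (0:ℝ) 1) × ↥(Set.Icc (0:ℝ) 1)),
        VectorMeasure.map ρ Prod.fst
          = (Measure.dirac (⟨0, by norm_num⟩ : ↥(Set.Icc (0:ℝ) 1))).toSignedMeasure ∧
        VectorMeasure.map ρ Prod.snd
          = (Measure.dirac (⟨1, by norm_num⟩ : ↥(Set.Icc (0:ℝ) 1))).toSignedMeasure ∧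
        c = ∫ z, |(z.1 : ℝ) - (z.2 : ℝ)| ^ p ∂ρ.totalVariation } = 0 := by
  set S := { c : ℝ | ∃ ρ : SignedMeasure (↥(Set.Icc (0:ℝ) 1) × ↥(Set.Icc (0:ℝ) 1)),
        VectorMeasure.map ρ Prod.fst
          = (Measure.dirac (⟨0, by norm_num⟩ : ↥(Set.Icc (0:ℝ) 1))).toSignedMeasure ∧
        VectorMeasure.map ρ Prod.snd
          = (Measure.dirac (⟨1, by norm_num⟩ : ↥(Set.Icc (0:ℝ) 1))).toSignedMeasure ∧
        c = ∫ z, |(z.1 : ℝ) - (z.2 : ℝ)| ^ p ∂ρ.totalVariation } with hS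
  have hmem : ∀ n : ℕ, n ≠ 0 →
      (∫ z, |(z.1 : ℝ) - (z.2 : ℝ)| ^ p ∂(SignedWpAux.ρ n).totalVariation) ∈ S :=
    fun n hn => ⟨SignedWpAux.ρ n, SignedWpAux.marg_fst n hn, SignedWpAux.marg_snd n hn, rfl⟩
  have hlb : ∀ c ∈ S, (0:ℝ) ≤ c := by
    rintro c ⟨ρ, -, -, rfl⟩
    exact integral_nonneg fun z => Real.rpow_nonneg (abs_nonneg _) p
  have hbdd : BddBelow S := ⟨0, hlb⟩
  have hne : S.Nonempty := ⟨_, hmem 1 one_ne_zero⟩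
  refine le_antisymm ?_ (le_csInf hne hlb)
  apply le_of_forall_pos_le_add
  intro ε hε
  rw [zero_add]
  -- find n with n * (1/n)^p < ε
  have htend : Filter.Tendsto (fun n : ℕ => (n:ℝ) ^ (1 - p)) Filter.atTop (nhds 0) := by
    have := tendsto_rpow_neg_atTop (by linarith : (0:ℝ) < p - 1)
    have h2 := this.comp tendsto_natCast_atTop_atTop (α := ℕ)
    simpa [neg_sub, Function.comp_def] using h2
  obtain ⟨n, hn1, hnε⟩ : ∃ n : ℕ, n ≠ 0 ∧ (n:ℝ) ^ (1 - p) < ε := by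
    rcases (htend.eventually (gt_mem_nhds hε)).and (Filter.eventually_atTop.mpr
        ⟨1, fun n hn => Nat.one_le_iff_ne_zero.mp hn⟩) |>.exists with ⟨n, h1, h2⟩
    exact ⟨n, h2, h1⟩
  have hcost := SignedWpAux.cost n hn1 p hp
  have hval : (n:ℝ) * ((1:ℝ)/n) ^ p = (n:ℝ) ^ (1 - p) := by
    have hn' : (0:ℝ) < n := by exact_mod_cast Nat.pos_of_ne_zero hn1
    rw [one_div, Real.inv_rpow hn'.le, ← Real.rpow_neg hn'.le, sub_eq_add_neg,
      Real.rpow_add hn', Real.rpow_one]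
  calc sInf S ≤ _ := csInf_le hbdd (hmem n hn1)
    _ = (n:ℝ) ^ (1 - p) := by rw [hcost, hval]
    _ ≤ ε := hnε.le
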